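/- Let 𝔹_P = {B ∈ Bor(C) : lim_{n→∞} n·ψ_n(B) = 0}, where ψ_n(B) = min{λ(B △ A) : A ∈ 𝔸_n}. Then: (1) 𝔹_P is a Boolean subalgebra of Bor(C); (2) for every B ∈ 𝔹_P and n < m, |φ_m(B)| ≤ ψ_n(B); (3) every B ∈ 𝔹_P is semibalanced. -/

import Mathlib

open MeasureTheory Set Filter Topology
open scoped ENNReal

noncomputable section

/-- The Cantor set `{-1,1}^ℕ`, coded with `Bool` (`true ↔ 1`, `false ↔ -1`). -/
abbrev Cantor : Type := ℕ → Bool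

/-- `δ_n(x) = x_n ∈ {-1,1}`. -/
def delta (n : ℕ) (x : Cantor) : ℝ := if x n then 1 else -1

/-- The cylinder `⟨s⟩ = {x : x↾m = s}`. -/
def cyl {m : ℕ} (s : Fin m → Bool) : Set Cantor := {x | ∀ i : Fin m, x i.1 = s i}

/-- `φ_n(A) = ∫_A δ_n dμ`. -/
def phi (μ : Measure Cantor) (n : ℕ) (A : Set Cantor) : ℝ := ∫ x in A, delta n x ∂μ

/-- `μ` is the Haar (fair-coin product) measure on the Cantor set:
every cylinder of length `m` has measure `2^{-m}`. -/
def IsHaar (μ : Measure Cantor) : Prop :=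
  ∀ (m : ℕ) (s : Fin m → Bool), μ (cyl s) = (2 : ℝ≥0∞)⁻¹ ^ m

/-- `A` is `(t,ε)`-semibalanced: `|φ_r(A)| < ε/r` for all `r > t`. -/
def Semibalanced (μ : Measure Cantor) (t : ℕ) (ε : ℝ) (A : Set Cantor) : Prop :=
  ∀ r : ℕ, t < r → |phi μ r A| < ε / (r : ℝ)

/-- `A` is `(m,ε)`-balanced. -/
def BalancedAt (μ : Measure Cantor) (m : ℕ) (ε : ℝ) (A : Set Cantor) : Prop :=
  ∀ s : Fin m → Bool,
    ((μ (A ∩ cyl s)).toReal / (μ (cyl s)).toReal < ε / (m : ℝ) ∨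
      (μ (cyl s \ A)).toReal / (μ (cyl s)).toReal < ε / (m : ℝ)) ∧
    ∀ r : ℕ, m < r → |phi μ r (A ∩ cyl s)| / (μ (cyl s)).toReal < ε / (r : ℝ)

/-- `A` is `(m,t,ε)`-balanced. -/
def BalancedAtT (μ : Measure Cantor) (m t : ℕ) (ε : ℝ) (A : Set Cantor) : Prop :=
  ∀ s : Fin m → Bool,
    ((μ (A ∩ cyl s)).toReal / (μ (cyl s)).toReal < ε / (m : ℝ) ∨
      (μ (cyl s \ A)).toReal / (μ (cyl s)).toReal < ε / (m : ℝ)) ∧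
    ∀ r : ℕ, m < r → r ≤ t → |phi μ r (A ∩ cyl s)| / (μ (cyl s)).toReal < ε / (r : ℝ)

/-- `ψ_n(B) = min{λ(B △ A) : A ∈ 𝔸_n}`: distance of `B` to the finite algebra
generated by the length-`n` cylinders (whose elements are the unions of cylinders). -/
def psi (μ : Measure Cantor) (n : ℕ) (B : Set Cantor) : ℝ :=
  sInf (Set.range fun S : Set (Fin n → Bool) =>
    (μ (symmDiff B (⋃ s ∈ S, cyl s))).toReal)

/-- Plebanek's algebra `𝔹_P = {B ∈ Bor(C) : n·ψ_n(B) → 0}`. -/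
def BP (μ : Measure Cantor) : Set (Set Cantor) :=
  {B | MeasurableSet B ∧ Tendsto (fun n : ℕ => (n : ℝ) * psi μ n B) atTop (𝓝 0)}

/-! ### Auxiliary machinery -/

/-- The basic clopen set `{x : x k = b}`. -/
def Ek (k : ℕ) (b : Bool) : Set Cantor := {x | x k = b}

lemma measEk (k : ℕ) (b : Bool) : MeasurableSet (Ek k b) := by
  have h : Ek k b = (fun x : Cantor => x k) ⁻¹' {b} := rfl
  rw [h]
  exact (measurable_pi_apply k) (measurableSet_singleton b)

lemma measCyl {m : ℕ} (s : Fin m → Bool) : MeasurableSet (cyl s) := by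
  have h : cyl s = ⋂ i : Fin m, Ek i.1 (s i) := by
    ext x; simp [cyl, Ek]
  rw [h]; exact MeasurableSet.iInter fun i => measEk _ _

lemma mem_cyl_iff {m : ℕ} {s : Fin m → Bool} {x : Cantor} :
    x ∈ cyl s ↔ s = fun i => x i.1 := by
  constructor
  · intro h; funext i; exact (h i).symm
  · rintro rfl i; rfl

lemma self_mem_cyl {m : ℕ} (x : Cantor) : x ∈ cyl (fun i : Fin m => x i.1) :=
  fun _ => rfl

lemma cyl_disjoint {m : ℕ} {s t : Fin m → Bool} (h : s ≠ t) :
    Disjoint (cyl s) (cyl t) := by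
  rw [Set.disjoint_left]
  intro x hs ht
  exact h ((mem_cyl_iff.1 hs).trans (mem_cyl_iff.1 ht).symm)

lemma compl_biUnion_cyl {m : ℕ} (S : Set (Fin m → Bool)) :
    (⋃ s ∈ S, cyl s)ᶜ = ⋃ s ∈ Sᶜ, cyl s := by
  ext x
  constructor
  · intro h
    by_cases hmem : (fun i : Fin m => x i.1) ∈ S
    · exact absurd (Set.mem_biUnion hmem (self_mem_cyl x)) h
    · exact Set.mem_biUnion (hmem : _ ∈ Sᶜ) (self_mem_cyl x)
  · intro hx hmem
    rcases Set.mem_iUnion₂.1 hx with ⟨t, htS, hxt⟩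
    rcases Set.mem_iUnion₂.1 hmem with ⟨u, huS, hxu⟩
    have htu : t = u := (mem_cyl_iff.1 hxt).trans (mem_cyl_iff.1 hxu).symm
    exact htS (htu ▸ huS)

lemma biUnion_univ_cyl (m : ℕ) :
    ⋃ s ∈ (Set.univ : Set (Fin m → Bool)), cyl s = Set.univ := by
  ext x
  simp only [Set.mem_univ, iff_true]
  exact Set.mem_biUnion trivial (self_mem_cyl x)

lemma mem_cyl_snoc {m : ℕ} {s : Fin m → Bool} {b : Bool} {x : Cantor} :
    x ∈ cyl (Fin.snoc s b) ↔ x ∈ cyl s ∧ x m = b := by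
  constructor
  · intro h
    refine ⟨fun i => ?_, ?_⟩
    · have := h i.castSucc
      simpa [Fin.snoc_castSucc] using this
    · have := h (Fin.last m)
      simpa [Fin.snoc_last] using this
  · rintro ⟨h1, h2⟩ i
    induction i using Fin.lastCases with
    | last => simpa [Fin.snoc_last] using h2
    | cast j => simpa [Fin.snoc_castSucc] using h1 j

lemma cyl_split {m : ℕ} (s : Fin m → Bool) :
    cyl s = cyl (Fin.snoc s true) ∪ cyl (Fin.snoc s false) := by
  ext x
  simp only [Set.mem_union, mem_cyl_snoc]
  cases hb : x m <;> simp [hb]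

lemma snoc_ne {m : ℕ} (s : Fin m → Bool) :
    (Fin.snoc s true : Fin (m + 1) → Bool) ≠ Fin.snoc s false := by
  intro h
  have := congrFun h (Fin.last m)
  simp [Fin.snoc_last] at this

lemma haar_cyl_inter (μ : Measure Cantor) (hμ : IsHaar μ) :
    ∀ (d m : ℕ) (s : Fin m → Bool) (b : Bool),
      μ (cyl s ∩ Ek (m + d) b) = (2 : ℝ≥0∞)⁻¹ ^ (m + 1) := by
  intro d
  induction d with
  | zero =>
    intro m s b
    have h : cyl s ∩ Ek (m + 0) b = cyl (Fin.snoc s b) := by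
      ext x
      simp only [Set.mem_inter_iff, mem_cyl_snoc, Ek, Set.mem_setOf_eq, Nat.add_zero]
    rw [h, hμ]
  | succ d ih =>
    intro m s b
    have hidx : m + (d + 1) = (m + 1) + d := by omega
    have hsplit : cyl s ∩ Ek ((m + 1) + d) b
        = (cyl (Fin.snoc s true) ∩ Ek ((m + 1) + d) b)
          ∪ (cyl (Fin.snoc s false) ∩ Ek ((m + 1) + d) b) := by
      rw [cyl_split s, Set.union_inter_distrib_right]
    have hdis : Disjoint (cyl (Fin.snoc s true) ∩ Ek ((m + 1) + d) b)
        (cyl (Fin.snoc s false) ∩ Ek ((m + 1) + d) b) :=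
      (cyl_disjoint (snoc_ne s)).mono Set.inter_subset_left Set.inter_subset_left
    rw [hidx, hsplit,
      measure_union hdis ((measCyl _).inter (measEk _ _)),
      ih (m + 1) (Fin.snoc s true) b, ih (m + 1) (Fin.snoc s false) b,
      pow_succ (2 : ℝ≥0∞)⁻¹ (m + 1), ← mul_add, ENNReal.inv_two_add_inv_two, mul_one]

lemma haar_cyl_inter' (μ : Measure Cantor) (hμ : IsHaar μ) {m k : ℕ} (h : m ≤ k)
    (s : Fin m → Bool) (b : Bool) :
    μ (cyl s ∩ Ek k b) = (2 : ℝ≥0∞)⁻¹ ^ (m + 1) := by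
  obtain ⟨d, rfl⟩ := Nat.exists_eq_add_of_le h
  exact haar_cyl_inter μ hμ d m s b

lemma phi_eq (μ : Measure Cantor) [IsProbabilityMeasure μ] (k : ℕ) (A : Set Cantor) :
    phi μ k A = (μ (A ∩ Ek k true)).toReal - (μ (A ∩ Ek k false)).toReal := by
  have hd : ∀ x : Cantor, delta k x
      = (Ek k true).indicator (fun _ => (1 : ℝ)) x
        - (Ek k false).indicator (fun _ => (1 : ℝ)) x := by
    intro x
    cases hb : x k <;> simp [delta, Ek, hb]
  have hde : delta k = fun x =>
      (Ek k true).indicator (fun _ => (1 : ℝ)) x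
        - (Ek k false).indicator (fun _ => (1 : ℝ)) x := funext hd
  have h1 : IntegrableOn ((Ek k true).indicator fun _ => (1 : ℝ)) A μ :=
    (integrable_const (1 : ℝ)).indicator (measEk k true)
  have h2 : IntegrableOn ((Ek k false).indicator fun _ => (1 : ℝ)) A μ :=
    (integrable_const (1 : ℝ)).indicator (measEk k false)
  unfold phi
  rw [hde, integral_sub h1 h2, setIntegral_indicator (measEk k true),
    setIntegral_indicator (measEk k false), setIntegral_const, setIntegral_const,
    smul_eq_mul, smul_eq_mul, mul_one, mul_one]
  rfl

lemma phi_biUnion_eq_zero (μ : Measure Cantor) [IsProbabilityMeasure μ] (hμ : IsHaar μ)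
    {m k : ℕ} (h : m ≤ k) (S : Set (Fin m → Bool)) :
    phi μ k (⋃ s ∈ S, cyl s) = 0 := by
  have key : ∀ b : Bool, μ ((⋃ s ∈ S, cyl s) ∩ Ek k b)
      = ∑' _ : S, (2 : ℝ≥0∞)⁻¹ ^ (m + 1) := by
    intro b
    rw [Set.iUnion₂_inter]
    rw [measure_biUnion S.to_countable
      (fun s _ t _ hst =>
        (cyl_disjoint hst).mono Set.inter_subset_left Set.inter_subset_left)
      (fun s _ => (measCyl s).inter (measEk k b))]
    exact tsum_congr fun s => haar_cyl_inter' μ hμ h s b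
  rw [phi_eq, key true, key false, sub_self]

lemma toReal_measure_diff_le (μ : Measure Cantor) [IsProbabilityMeasure μ]
    (X Y : Set Cantor) :
    |(μ X).toReal - (μ Y).toReal| ≤ (μ (symmDiff X Y)).toReal := by
  have hXY : ∀ U V : Set Cantor, μ U ≤ μ V + μ (symmDiff U V) := by
    intro U V
    calc μ U ≤ μ (V ∪ symmDiff U V) := measure_mono (fun x hx => by
          by_cases h : x ∈ V
          · exact Or.inl h
          · exact Or.inr (Set.mem_symmDiff.2 (Or.inl ⟨hx, h⟩)))
      _ ≤ μ V + μ (symmDiff U V) := measure_union_le _ _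
  have h1 := hXY X Y
  have h2 := hXY Y X
  rw [symmDiff_comm] at h2
  have fX := measure_ne_top μ X
  have fY := measure_ne_top μ Y
  have fS := measure_ne_top μ (symmDiff X Y)
  have t1 : (μ X).toReal ≤ (μ Y).toReal + (μ (symmDiff X Y)).toReal := by
    rw [← ENNReal.toReal_add fY fS]
    exact ENNReal.toReal_mono (ENNReal.add_ne_top.2 ⟨fY, fS⟩) h1
  have t2 : (μ Y).toReal ≤ (μ X).toReal + (μ (symmDiff X Y)).toReal := by
    rw [← ENNReal.toReal_add fX fS]
    exact ENNReal.toReal_mono (ENNReal.add_ne_top.2 ⟨fX, fS⟩) h2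
  rw [abs_sub_le_iff]
  constructor <;> linarith

lemma abs_phi_sub_le (μ : Measure Cantor) [IsProbabilityMeasure μ] (k : ℕ)
    (B A : Set Cantor) :
    |phi μ k B - phi μ k A| ≤ (μ (symmDiff B A)).toReal := by
  rw [phi_eq, phi_eq]
  have e1 : symmDiff (B ∩ Ek k true) (A ∩ Ek k true) = symmDiff B A ∩ Ek k true :=
    (Set.inter_symmDiff_distrib_right _ _ _).symm
  have e2 : symmDiff (B ∩ Ek k false) (A ∩ Ek k false) = symmDiff B A ∩ Ek k false :=
    (Set.inter_symmDiff_distrib_right _ _ _).symm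
  have b1 := toReal_measure_diff_le μ (B ∩ Ek k true) (A ∩ Ek k true)
  have b2 := toReal_measure_diff_le μ (B ∩ Ek k false) (A ∩ Ek k false)
  rw [e1] at b1
  rw [e2] at b2
  have hsum : (μ (symmDiff B A ∩ Ek k true)).toReal
      + (μ (symmDiff B A ∩ Ek k false)).toReal = (μ (symmDiff B A)).toReal := by
    rw [← ENNReal.toReal_add (measure_ne_top _ _) (measure_ne_top _ _)]
    congr 1
    have hEF : symmDiff B A ∩ Ek k false = symmDiff B A \ Ek k true := by
      ext x
      simp [Ek, Set.mem_diff]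
    rw [hEF]
    exact measure_inter_add_diff _ (measEk k true)
  have key : |((μ (B ∩ Ek k true)).toReal - (μ (B ∩ Ek k false)).toReal)
      - ((μ (A ∩ Ek k true)).toReal - (μ (A ∩ Ek k false)).toReal)|
      ≤ |(μ (B ∩ Ek k true)).toReal - (μ (A ∩ Ek k true)).toReal|
        + |(μ (B ∩ Ek k false)).toReal - (μ (A ∩ Ek k false)).toReal| := by
    have heq : ((μ (B ∩ Ek k true)).toReal - (μ (B ∩ Ek k false)).toReal)
        - ((μ (A ∩ Ek k true)).toReal - (μ (A ∩ Ek k false)).toReal)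
        = ((μ (B ∩ Ek k true)).toReal - (μ (A ∩ Ek k true)).toReal)
          - ((μ (B ∩ Ek k false)).toReal - (μ (A ∩ Ek k false)).toReal) := by ring
    rw [heq]
    exact abs_sub _ _
  linarith

lemma psi_nonneg (μ : Measure Cantor) (n : ℕ) (B : Set Cantor) : 0 ≤ psi μ n B :=
  le_csInf (Set.range_nonempty _) (by rintro b ⟨S, rfl⟩; exact ENNReal.toReal_nonneg)

lemma psi_le (μ : Measure Cantor) (n : ℕ) (B : Set Cantor) (S : Set (Fin n → Bool)) :
    psi μ n B ≤ (μ (symmDiff B (⋃ s ∈ S, cyl s))).toReal :=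
  csInf_le ⟨0, by rintro b ⟨T, rfl⟩; exact ENNReal.toReal_nonneg⟩ ⟨S, rfl⟩

lemma psi_exists (μ : Measure Cantor) (n : ℕ) (B : Set Cantor) :
    ∃ S : Set (Fin n → Bool), psi μ n B = (μ (symmDiff B (⋃ s ∈ S, cyl s))).toReal := by
  have h := (Set.range_nonempty
    (fun S : Set (Fin n → Bool) => (μ (symmDiff B (⋃ s ∈ S, cyl s))).toReal)).csInf_mem
    (Set.finite_range _)
  rcases h with ⟨S, hS⟩
  exact ⟨S, hS.symm⟩

lemma abs_phi_le_psi (μ : Measure Cantor) [IsProbabilityMeasure μ] (hμ : IsHaar μ)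
    {n k : ℕ} (h : n ≤ k) (B : Set Cantor) :
    |phi μ k B| ≤ psi μ n B := by
  apply le_csInf (Set.range_nonempty _)
  rintro b ⟨S, rfl⟩
  have h0 := phi_biUnion_eq_zero μ hμ h S
  have hb := abs_phi_sub_le μ k B (⋃ s ∈ S, cyl s)
  rwa [h0, sub_zero] at hb

lemma psi_univ (μ : Measure Cantor) [IsProbabilityMeasure μ] (n : ℕ) :
    psi μ n Set.univ = 0 := by
  have h := psi_le μ n Set.univ Set.univ
  rw [biUnion_univ_cyl, symmDiff_self] at h
  simp only [Set.bot_eq_empty, measure_empty, ENNReal.toReal_zero] at h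
  exact le_antisymm h (psi_nonneg μ n _)

lemma psi_compl (μ : Measure Cantor) (n : ℕ) (B : Set Cantor) :
    psi μ n Bᶜ = psi μ n B := by
  have key : ∀ S : Set (Fin n → Bool),
      symmDiff Bᶜ (⋃ s ∈ S, cyl s) = symmDiff B (⋃ s ∈ Sᶜ, cyl s) := by
    intro S
    calc symmDiff Bᶜ (⋃ s ∈ S, cyl s)
        = symmDiff Bᶜ ((⋃ s ∈ S, cyl s)ᶜ)ᶜ := by rw [compl_compl]
      _ = symmDiff B (⋃ s ∈ S, cyl s)ᶜ := compl_symmDiff_compl _ _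
      _ = symmDiff B (⋃ s ∈ Sᶜ, cyl s) := by rw [compl_biUnion_cyl]
  unfold psi
  congr 1
  ext b
  simp only [Set.mem_range]
  constructor
  · rintro ⟨S, rfl⟩
    exact ⟨Sᶜ, by rw [key S]⟩
  · rintro ⟨S, rfl⟩
    exact ⟨Sᶜ, by rw [key Sᶜ, compl_compl]⟩

lemma psi_union_le (μ : Measure Cantor) [IsProbabilityMeasure μ] (n : ℕ)
    (A B : Set Cantor) :
    psi μ n (A ∪ B) ≤ psi μ n A + psi μ n B := by
  obtain ⟨S, hS⟩ := psi_exists μ n A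
  obtain ⟨T, hT⟩ := psi_exists μ n B
  have hmono : μ (symmDiff (A ∪ B) (⋃ s ∈ S ∪ T, cyl s))
      ≤ μ (symmDiff A (⋃ s ∈ S, cyl s)) + μ (symmDiff B (⋃ s ∈ T, cyl s)) := by
    calc μ (symmDiff (A ∪ B) (⋃ s ∈ S ∪ T, cyl s))
        ≤ μ (symmDiff A (⋃ s ∈ S, cyl s) ∪ symmDiff B (⋃ s ∈ T, cyl s)) :=
          measure_mono (by
            rw [Set.biUnion_union]
            intro x hx
            simp only [Set.mem_symmDiff, Set.mem_union] at hx ⊢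
            tauto)
      _ ≤ _ := measure_union_le _ _
  refine (psi_le μ n (A ∪ B) (S ∪ T)).trans ?_
  rw [hS, hT, ← ENNReal.toReal_add (measure_ne_top _ _) (measure_ne_top _ _)]
  exact ENNReal.toReal_mono
    (ENNReal.add_ne_top.2 ⟨measure_ne_top _ _, measure_ne_top _ _⟩) hmono

/-- `𝔹_P` is a Boolean subalgebra of `Bor(C)`; `|φ_m(B)| ≤ ψ_n(B)` for `B ∈ 𝔹_P`
and `n < m`; and every `B ∈ 𝔹_P` is semibalanced. -/
theorem stmt18 (μ : Measure Cantor) [IsProbabilityMeasure μ] (hμ : IsHaar μ) :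
    (Set.univ ∈ BP μ ∧ (∀ B ∈ BP μ, Bᶜ ∈ BP μ) ∧
      ∀ A ∈ BP μ, ∀ B ∈ BP μ, A ∪ B ∈ BP μ) ∧
    (∀ B ∈ BP μ, ∀ n k : ℕ, n < k → |phi μ k B| ≤ psi μ n B) ∧
    (∀ B ∈ BP μ, ∀ ε : ℝ, 0 < ε → ∃ t : ℕ, Semibalanced μ t ε B) := by
  refine ⟨⟨?_, ?_, ?_⟩, ?_, ?_⟩
  · -- univ ∈ BP
    refine ⟨MeasurableSet.univ, ?_⟩
    have h : (fun n : ℕ => (n : ℝ) * psi μ n Set.univ) = fun _ => 0 := by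
      funext n; rw [psi_univ]; ring
    rw [h]
    exact tendsto_const_nhds
  · -- closed under complement
    rintro B ⟨hBm, hBt⟩
    refine ⟨hBm.compl, ?_⟩
    have h : (fun n : ℕ => (n : ℝ) * psi μ n Bᶜ)
        = fun n : ℕ => (n : ℝ) * psi μ n B := by
      funext n; rw [psi_compl]
    rw [h]
    exact hBt
  · -- closed under union
    rintro A ⟨hAm, hAt⟩ B ⟨hBm, hBt⟩
    refine ⟨hAm.union hBm, ?_⟩
    have h0 : Tendsto (fun n : ℕ => (n : ℝ) * psi μ n A + (n : ℝ) * psi μ n B)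
        atTop (𝓝 0) := by
      simpa using hAt.add hBt
    refine squeeze_zero
      (fun n => mul_nonneg (Nat.cast_nonneg n) (psi_nonneg μ n _))
      (fun n => ?_) h0
    calc (n : ℝ) * psi μ n (A ∪ B)
        ≤ (n : ℝ) * (psi μ n A + psi μ n B) :=
          mul_le_mul_of_nonneg_left (psi_union_le μ n A B) (Nat.cast_nonneg n)
      _ = (n : ℝ) * psi μ n A + (n : ℝ) * psi μ n B := by ring
  · -- |φ_k(B)| ≤ ψ_n(B)
    intro B _ n k hnk
    exact abs_phi_le_psi μ hμ hnk.le B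
  · -- semibalanced
    rintro B ⟨hBm, hBt⟩ ε hε
    obtain ⟨t, ht⟩ := Filter.eventually_atTop.1
      (hBt.eventually (eventually_lt_nhds (by linarith : (0 : ℝ) < ε / 2)))
    refine ⟨max t 1, ?_⟩
    intro r hr
    have hr1 : 1 < r := lt_of_le_of_lt (le_max_right t 1) hr
    have hrt : t ≤ r - 1 := by
      have := lt_of_le_of_lt (le_max_left t 1) hr
      omega
    have hψ := ht (r - 1) hrt
    have hφ : |phi μ r B| ≤ psi μ (r - 1) B :=
      abs_phi_le_psi μ hμ (by omega : r - 1 ≤ r) B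
    have hψ0 : 0 ≤ psi μ (r - 1) B := psi_nonneg μ _ B
    have hrp : (0 : ℝ) < r := by
      have : 0 < r := by omega
      exact_mod_cast this
    have hc : (r : ℝ) ≤ 2 * ((r - 1 : ℕ) : ℝ) := by
      have h2 : r ≤ 2 * (r - 1) := by omega
      calc (r : ℝ) ≤ ((2 * (r - 1) : ℕ) : ℝ) := by exact_mod_cast h2
        _ = 2 * ((r - 1 : ℕ) : ℝ) := by push_cast; ring
    rw [lt_div_iff₀ hrp]
    calc |phi μ r B| * r ≤ psi μ (r - 1) B * (2 * ((r - 1 : ℕ) : ℝ)) :=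
          mul_le_mul hφ hc (le_of_lt hrp) hψ0
      _ = 2 * (((r - 1 : ℕ) : ℝ) * psi μ (r - 1) B) := by ring
      _ < 2 * (ε / 2) := by linarith
      _ = ε := by ring
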